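/- Let A₁, B₁ be n×n real symmetric positive-definite matrices, E an invertible real matrix, and set A₂ = E A₁ E^T, B₂ = E B₁ E^T. Let E₁ = B₁^{1/2}(B₁^{-1/2} A₁ B₁^{-1/2})^{1/2} B₁^{-1/2} and E₂ = B₂^{1/2}(B₂^{-1/2} A₂ B₂^{-1/2})^{1/2} B₂^{-1/2} be the corresponding parallel-transport matrices. Then E₂ E = E E₁; equivalently, for every symmetric matrix S, E (E₁ S E₁^T) E^T = E₂ (E S E^T) E₂^T, i.e., congruence by E commutes with parallel transport. -/

import Mathlib

open Matrix

lemma aux_posDef_conj {n : ℕ} {A B : Matrix (Fin n) (Fin n) ℝ}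
    (hA : A.PosDef) (hB : B.det ≠ 0) : (B * A * Bᵀ).PosDef := by
  have hBT : Bᵀ.det ≠ 0 := by rwa [Matrix.det_transpose]
  have hinj : Function.Injective (Bᵀ.mulVec) :=
    Matrix.mulVec_injective_iff_isUnit.mpr ((Matrix.isUnit_iff_isUnit_det _).mpr hBT.isUnit)
  refine PosDef.of_dotProduct_mulVec_pos ?_ (fun x hx => ?_)
  · have := Matrix.isHermitian_mul_mul_conjTranspose B hA.1
    simpa [Matrix.conjTranspose_eq_transpose_of_trivial] using this
  · have hxx : Bᵀ *ᵥ x ≠ 0 := fun h => hx (hinj (by simpa using h))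
    have h2 := hA.dotProduct_mulVec_pos hxx
    rw [star_trivial] at h2
    have key : x ⬝ᵥ ((B * A * Bᵀ) *ᵥ x) = (Bᵀ *ᵥ x) ⬝ᵥ (A *ᵥ (Bᵀ *ᵥ x)) := by
      rw [← Matrix.mulVec_mulVec, ← Matrix.mulVec_mulVec, Matrix.dotProduct_mulVec,
        ← Matrix.mulVec_transpose]
    rw [star_trivial, key]
    exact h2

/-- Congruence by an invertible `E` commutes with parallel transport:
with `A₂ = E A₁ Eᵀ`, `B₂ = E B₁ Eᵀ` and parallel-transport matrices
`E₁ = B₁^{1/2}(B₁^{-1/2} A₁ B₁^{-1/2})^{1/2} B₁^{-1/2}`,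
`E₂ = B₂^{1/2}(B₂^{-1/2} A₂ B₂^{-1/2})^{1/2} B₂^{-1/2}`, one has `E₂ E = E E₁`, and hence
`E (E₁ S E₁ᵀ) Eᵀ = E₂ (E S Eᵀ) E₂ᵀ` for every symmetric `S`. -/
theorem stmt_14 (n : ℕ) (A₁ B₁ A₂ B₂ E sB₁ sC₁ sB₂ sC₂ : Matrix (Fin n) (Fin n) ℝ)
    (hA₁ : A₁.PosDef) (hB₁ : B₁.PosDef) (hE : E.det ≠ 0)
    (hA₂ : A₂ = E * A₁ * Eᵀ) (hB₂ : B₂ = E * B₁ * Eᵀ)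
    (hsB₁ : sB₁.PosDef) (hsB₁2 : sB₁ * sB₁ = B₁)
    (hsC₁ : sC₁.PosDef) (hsC₁2 : sC₁ * sC₁ = sB₁⁻¹ * A₁ * sB₁⁻¹)
    (hsB₂ : sB₂.PosDef) (hsB₂2 : sB₂ * sB₂ = B₂)
    (hsC₂ : sC₂.PosDef) (hsC₂2 : sC₂ * sC₂ = sB₂⁻¹ * A₂ * sB₂⁻¹) :
    (sB₂ * sC₂ * sB₂⁻¹) * E = E * (sB₁ * sC₁ * sB₁⁻¹) ∧
      ∀ S : Matrix (Fin n) (Fin n) ℝ, S.IsSymm →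
        E * ((sB₁ * sC₁ * sB₁⁻¹) * S * (sB₁ * sC₁ * sB₁⁻¹)ᵀ) * Eᵀ =
          (sB₂ * sC₂ * sB₂⁻¹) * (E * S * Eᵀ) * (sB₂ * sC₂ * sB₂⁻¹)ᵀ := by
  -- basic unit / symmetry facts
  have hB1T : sB₁ᵀ = sB₁ := by
    rw [← Matrix.conjTranspose_eq_transpose_of_trivial]; exact hsB₁.1
  have hB2T : sB₂ᵀ = sB₂ := by
    rw [← Matrix.conjTranspose_eq_transpose_of_trivial]; exact hsB₂.1
  have hEu : IsUnit E.det := hE.isUnit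
  have hETu : IsUnit Eᵀ.det := by rwa [Matrix.det_transpose]
  have hB1u : IsUnit sB₁.det := hsB₁.det_pos.ne'.isUnit
  have hB2u : IsUnit sB₂.det := hsB₂.det_pos.ne'.isUnit
  haveI : Invertible E := E.invertibleOfIsUnitDet hEu
  haveI : Invertible Eᵀ := Eᵀ.invertibleOfIsUnitDet hETu
  haveI : Invertible sB₁ := sB₁.invertibleOfIsUnitDet hB1u
  haveI : Invertible sB₂ := sB₂.invertibleOfIsUnitDet hB2u
  set N : Matrix (Fin n) (Fin n) ℝ := sB₂⁻¹ * E * sB₁ with hNdef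
  have hNT : Nᵀ = sB₁ * Eᵀ * sB₂⁻¹ := by
    simp [hNdef, Matrix.transpose_mul, Matrix.transpose_nonsing_inv, hB1T, hB2T,
      Matrix.mul_assoc]
  have hNdet : N.det ≠ 0 := by
    have : N.det = sB₂⁻¹.det * E.det * sB₁.det := by
      rw [hNdef, Matrix.det_mul, Matrix.det_mul]
    rw [this]
    exact mul_ne_zero (mul_ne_zero hsB₂.inv.det_pos.ne' hE) hsB₁.det_pos.ne'
  have hNNT : N * Nᵀ = 1 := by
    rw [hNT, hNdef]
    have e1 : sB₂⁻¹ * E * sB₁ * (sB₁ * Eᵀ * sB₂⁻¹)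
        = sB₂⁻¹ * (E * (sB₁ * sB₁) * Eᵀ) * sB₂⁻¹ := by noncomm_ring
    rw [e1, hsB₁2, ← hB₂, ← hsB₂2, ← Matrix.mul_assoc,
      Matrix.nonsing_inv_mul _ hB2u, Matrix.one_mul, Matrix.mul_nonsing_inv _ hB2u]
  have hNTN : Nᵀ * N = 1 := by
    rw [← Matrix.inv_eq_right_inv hNNT]
    exact Matrix.nonsing_inv_mul N hNdet.isUnit
  have hC : sC₂ = N * sC₁ * Nᵀ := by
    open scoped MatrixOrder in
    refine (CFC.sq_eq_sq_iff sC₂ (N * sC₁ * Nᵀ) hsC₂.posSemidef.nonneg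
      (aux_posDef_conj hsC₁ hNdet).posSemidef.nonneg).mp ?_
    rw [pow_two, pow_two, hsC₂2]
    have e2 : N * sC₁ * Nᵀ * (N * sC₁ * Nᵀ) = N * sC₁ * (Nᵀ * N) * (sC₁ * Nᵀ) := by
      noncomm_ring
    rw [e2, hNTN, Matrix.mul_one]
    have e3 : N * sC₁ * (sC₁ * Nᵀ) = N * (sC₁ * sC₁) * Nᵀ := by noncomm_ring
    rw [e3, hsC₁2, hA₂, hNdef, hNT]
    have e4 : sB₂⁻¹ * E * sB₁ * (sB₁⁻¹ * A₁ * sB₁⁻¹) * (sB₁ * Eᵀ * sB₂⁻¹)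
        = sB₂⁻¹ * (E * ((sB₁ * sB₁⁻¹) * A₁ * (sB₁⁻¹ * sB₁)) * Eᵀ) * sB₂⁻¹ := by
      noncomm_ring
    rw [e4, Matrix.mul_nonsing_inv _ hB1u, Matrix.nonsing_inv_mul _ hB1u,
      Matrix.one_mul, Matrix.mul_one]
  have hEBE : Eᵀ * (sB₂⁻¹ * (sB₂⁻¹ * E)) = sB₁⁻¹ * sB₁⁻¹ := by
    have h1 : sB₂⁻¹ * sB₂⁻¹ = B₂⁻¹ := by rw [← Matrix.mul_inv_rev, hsB₂2]
    have h3 : B₁⁻¹ = sB₁⁻¹ * sB₁⁻¹ := by rw [← hsB₁2, Matrix.mul_inv_rev]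
    calc Eᵀ * (sB₂⁻¹ * (sB₂⁻¹ * E)) = Eᵀ * (sB₂⁻¹ * sB₂⁻¹) * E := by
          rw [Matrix.mul_assoc, Matrix.mul_assoc]
      _ = Eᵀ * (Eᵀ⁻¹ * (B₁⁻¹ * E⁻¹)) * E := by
          rw [h1, hB₂, Matrix.mul_inv_rev, Matrix.mul_inv_rev]
      _ = B₁⁻¹ := by
          rw [← Matrix.mul_assoc Eᵀ, Matrix.mul_nonsing_inv _ hETu, Matrix.one_mul,
            Matrix.mul_assoc, Matrix.nonsing_inv_mul _ hEu, Matrix.mul_one]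
      _ = sB₁⁻¹ * sB₁⁻¹ := h3
  have hcan1 : ∀ X : Matrix (Fin n) (Fin n) ℝ, sB₁ * (sB₁⁻¹ * X) = X := fun X => by
    rw [← Matrix.mul_assoc, Matrix.mul_nonsing_inv _ hB1u, Matrix.one_mul]
  have hcan2 : ∀ X : Matrix (Fin n) (Fin n) ℝ, sB₂ * (sB₂⁻¹ * X) = X := fun X => by
    rw [← Matrix.mul_assoc, Matrix.mul_nonsing_inv _ hB2u, Matrix.one_mul]
  have hmain : (sB₂ * sC₂ * sB₂⁻¹) * E = E * (sB₁ * sC₁ * sB₁⁻¹) := by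
    rw [hC, hNdef, hNT]
    simp [Matrix.mul_assoc, hEBE, hcan1, hcan2]
  refine ⟨hmain, fun S _ => ?_⟩
  have h2 : (sB₁ * sC₁ * sB₁⁻¹)ᵀ * Eᵀ = Eᵀ * (sB₂ * sC₂ * sB₂⁻¹)ᵀ := by
    rw [← Matrix.transpose_mul, ← Matrix.transpose_mul, hmain]
  calc E * ((sB₁ * sC₁ * sB₁⁻¹) * S * (sB₁ * sC₁ * sB₁⁻¹)ᵀ) * Eᵀ
      = (E * (sB₁ * sC₁ * sB₁⁻¹)) * S * ((sB₁ * sC₁ * sB₁⁻¹)ᵀ * Eᵀ) := by noncomm_ring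
    _ = ((sB₂ * sC₂ * sB₂⁻¹) * E) * S * (Eᵀ * (sB₂ * sC₂ * sB₂⁻¹)ᵀ) := by rw [hmain, h2]
    _ = (sB₂ * sC₂ * sB₂⁻¹) * (E * S * Eᵀ) * (sB₂ * sC₂ * sB₂⁻¹)ᵀ := by noncomm_ring
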